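/- Assume the charge constraint ∑_{k} Q k = 0. Then the forward-mapping approximation ζ̃(z) = (z − z_c) · Complex.exp(Γ + ∑_{k} Q k · Complex.log((z − Z k)/(z − z_c))) tends to infinity as z tends to infinity in ℂ; that is, ζ̃ maps the cobounded filter on ℂ to the cobounded filter on ℂ (equivalently ‖ζ̃(z)‖ → ∞ as ‖z‖ → ∞). -/

import Mathlib

open Filter

theorem stmt_4 (N : ℕ) (hN : 0 < N) (Q : Fin N → ℝ) (hQ : ∑ k, Q k = 0)
    (Z : Fin N → ℂ) (z_c : ℂ) (Γ : ℝ) :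
    Tendsto
      (fun z : ℂ =>
        (z - z_c) * Complex.exp ((Γ : ℂ) + ∑ k, (Q k : ℂ) * Complex.log ((z - Z k) / (z - z_c))))
      (Bornology.cobounded ℂ) (Bornology.cobounded ℂ) := by
  have hsub : Tendsto (fun z : ℂ => z - z_c) (Bornology.cobounded ℂ) (Bornology.cobounded ℂ) := by
    rw [← tendsto_norm_atTop_iff_cobounded]
    refine tendsto_atTop_mono (fun z => ?_)
      ((tendsto_norm_cobounded_atTop (E := ℂ)).atTop_add (tendsto_const_nhds (x := -‖z_c‖)))
    have := norm_sub_norm_le z z_c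
    linarith
  have hinv : Tendsto (fun z : ℂ => (z - z_c)⁻¹) (Bornology.cobounded ℂ) (nhds 0) :=
    tendsto_inv₀_cobounded.comp hsub
  have hne : ∀ᶠ z : ℂ in Bornology.cobounded ℂ, z - z_c ≠ 0 := by
    filter_upwards [eventually_cobounded_le_norm (‖z_c‖ + 1)] with z hz
    intro h
    rw [sub_eq_zero] at h
    simp [h] at hz
    linarith
  have hratio : ∀ k : Fin N, Tendsto (fun z : ℂ => (z - Z k) / (z - z_c))
      (Bornology.cobounded ℂ) (nhds 1) := by
    intro k
    have h1 : Tendsto (fun z : ℂ => 1 + (z_c - Z k) * (z - z_c)⁻¹)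
        (Bornology.cobounded ℂ) (nhds 1) := by
      have := (tendsto_const_nhds (x := z_c - Z k)).mul hinv
      simpa using tendsto_const_nhds (x := (1 : ℂ)) |>.add this
    refine h1.congr' ?_
    filter_upwards [hne] with z hz
    field_simp
    ring

  have hlog : ∀ k : Fin N, Tendsto (fun z : ℂ => (Q k : ℂ) * Complex.log ((z - Z k) / (z - z_c)))
      (Bornology.cobounded ℂ) (nhds 0) := by
    intro k
    have hc : ContinuousAt Complex.log 1 := continuousAt_clog Complex.one_mem_slitPlane
    have := (hc.tendsto.comp (hratio k)).const_mul (Q k : ℂ)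
    simpa using this
  have hexp : Tendsto (fun z : ℂ =>
      Complex.exp ((Γ : ℂ) + ∑ k, (Q k : ℂ) * Complex.log ((z - Z k) / (z - z_c))))
      (Bornology.cobounded ℂ) (nhds (Complex.exp Γ)) := by
    have hsum : Tendsto (fun z : ℂ => ∑ k, (Q k : ℂ) * Complex.log ((z - Z k) / (z - z_c)))
        (Bornology.cobounded ℂ) (nhds 0) := by
      have := tendsto_finset_sum Finset.univ (fun k _ => hlog k)
      simpa using this
    have := (tendsto_const_nhds (x := (Γ : ℂ))).add hsum
    rw [add_zero] at this
    exact (Complex.continuous_exp.continuousAt.tendsto).comp this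
  rw [← tendsto_norm_atTop_iff_cobounded]
  have hnorm : Tendsto (fun z : ℂ =>
      ‖z - z_c‖ * ‖Complex.exp ((Γ : ℂ) + ∑ k, (Q k : ℂ) * Complex.log ((z - Z k) / (z - z_c)))‖)
      (Bornology.cobounded ℂ) atTop := by
    refine Tendsto.atTop_mul_pos ?_ (tendsto_norm_atTop_iff_cobounded.mpr hsub) (hexp.norm)
    simpa using Real.exp_pos Γ
  simpa [norm_mul] using hnorm
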